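/- Generalized Hölder / read-k inequality: Let X_1,...,X_m be mutually independent random variables and let F_1,...,F_n be non-negative random variables forming a read-k family, i.e., each F_j is a function of X_{P_j} for some P_j ⊆ [m] and each index i ∈ [m] belongs to at most k of the sets P_j. Then E[Π_{j=1}^n F_j] ≤ (Π_{j=1}^n E[F_j^k])^{1/k}. -/

import Mathlib

open MeasureTheory ProbabilityTheory Finset ENNReal

-- helper: (a^k)^(1/k) = a in ℝ≥0∞
lemma aux_pow_rpow {k : ℕ} (hk : k ≠ 0) (a : ℝ≥0∞) : (a ^ k) ^ ((1:ℝ)/k) = a := by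
  rw [← ENNReal.rpow_natCast a k, ← ENNReal.rpow_mul]
  rw [mul_one_div, div_self (by exact_mod_cast hk), ENNReal.rpow_one]

lemma aux_rpow_pow {k : ℕ} (hk : k ≠ 0) (a : ℝ≥0∞) : (a ^ ((1:ℝ)/k)) ^ k = a := by
  rw [← ENNReal.rpow_natCast _ k, ← ENNReal.rpow_mul]
  rw [one_div_mul_cancel (by exact_mod_cast hk), ENNReal.rpow_one]

/-- Hölder with total exponent ≤ 1 on a probability space. -/
lemma holder_le_one {α ι : Type*} [MeasurableSpace α] {μ : Measure α} [IsProbabilityMeasure μ]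
    (s : Finset ι) {f : ι → α → ℝ≥0∞} (hf : ∀ i ∈ s, AEMeasurable (f i) μ)
    {p : ι → ℝ} (hp : ∑ i ∈ s, p i ≤ 1) (h2p : ∀ i ∈ s, 0 ≤ p i) :
    ∫⁻ a, ∏ i ∈ s, f i a ^ p i ∂μ ≤ ∏ i ∈ s, (∫⁻ a, f i a ∂μ) ^ p i := by
  classical
  set f' : Option ι → α → ℝ≥0∞ := fun o => o.elim 1 f with hf'
  set p' : Option ι → ℝ := fun o => o.elim (1 - ∑ i ∈ s, p i) p with hp'
  set s' : Finset (Option ι) := insert none (s.image some) with hs'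
  have hnone : none ∉ s.image some := by simp
  have hsum : ∑ o ∈ s', p' o = 1 := by
    rw [hs', Finset.sum_insert hnone, Finset.sum_image (by simp)]
    simp [hp']
  have hnn : ∀ o ∈ s', 0 ≤ p' o := by
    intro o ho
    rcases o with _ | i
    · simpa [hp'] using hp
    · have : i ∈ s := by
        simpa [hs', Finset.mem_image] using ho
      simpa [hp'] using h2p i this
  have hmeas : ∀ o ∈ s', AEMeasurable (f' o) μ := by
    intro o ho
    rcases o with _ | i
    · exact aemeasurable_const
    · have : i ∈ s := by simpa [hs', Finset.mem_image] using ho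
      simpa [hf'] using hf i this
  have key := ENNReal.lintegral_prod_norm_pow_le s' hmeas hsum hnn
  have h1 : ∀ a : α, f' none a ^ p' none = 1 := by intro a; simp [hf']
  have h2 : (∫⁻ a, f' none a ∂μ) ^ p' none = 1 := by simp [hf']
  calc ∫⁻ a, ∏ i ∈ s, f i a ^ p i ∂μ
      = ∫⁻ a, ∏ o ∈ s', f' o a ^ p' o ∂μ := by
        congr 1; funext a
        rw [hs', Finset.prod_insert hnone, h1, one_mul, Finset.prod_image (by simp)]
        simp [hf', hp']
    _ ≤ ∏ o ∈ s', (∫⁻ a, f' o a ∂μ) ^ p' o := key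
    _ = ∏ i ∈ s, (∫⁻ a, f i a ∂μ) ^ p i := by
        rw [hs', Finset.prod_insert hnone, h2, one_mul, Finset.prod_image (by simp)]
        simp [hf', hp']

/-- `Fin.insertNth` specialized to ℝ coordinates, to help elaboration. -/
def insF {m : ℕ} (i₀ : Fin (m+1)) (x₀ : ℝ) (y : Fin m → ℝ) : Fin (m+1) → ℝ :=
  Fin.insertNth (α := fun _ => ℝ) i₀ x₀ y

@[simp] lemma insF_same {m : ℕ} (i₀ : Fin (m+1)) (x₀ : ℝ) (y : Fin m → ℝ) :
    insF i₀ x₀ y i₀ = x₀ := Fin.insertNth_apply_same (α := fun _ => ℝ) i₀ x₀ y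

@[simp] lemma insF_succAbove {m : ℕ} (i₀ : Fin (m+1)) (x₀ : ℝ) (y : Fin m → ℝ) (i : Fin m) :
    insF i₀ x₀ y (i₀.succAbove i) = y i := Fin.insertNth_apply_succAbove (α := fun _ => ℝ) i₀ x₀ y i

/-- Core read-k Hölder inequality on a finite product of probability measures on ℝ. -/
lemma read_k_pi : ∀ (m : ℕ) (μ : Fin m → Measure ℝ) (_ : ∀ i, IsProbabilityMeasure (μ i))
    {n k : ℕ} (_ : 0 < k) (P : Fin n → Finset (Fin m))
    (_ : ∀ i, (Finset.univ.filter fun j => i ∈ P j).card ≤ k)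
    (g : Fin n → (Fin m → ℝ) → ℝ≥0∞) (_ : ∀ j, Measurable (g j))
    (_ : ∀ j x y, (∀ i ∈ P j, x i = y i) → g j x = g j y),
    ∫⁻ x, ∏ j, g j x ∂Measure.pi μ ≤ ∏ j, (∫⁻ x, (g j x) ^ k ∂Measure.pi μ) ^ ((1:ℝ)/k) := by
  intro m
  induction m with
  | zero =>
    intro μ hprob n k hk P hread g hgm hgagree
    haveI : ∀ i, IsProbabilityMeasure (μ i) := hprob
    have hconst : ∀ j (x : Fin 0 → ℝ), g j x = g j default :=
      fun j x => hgagree j x default (fun i _ => i.elim0)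
    have h1 : ∫⁻ x, ∏ j, g j x ∂Measure.pi μ = ∏ j, g j default := by
      have : (fun x : Fin 0 → ℝ => ∏ j, g j x) = fun _ => ∏ j, g j default := by
        funext x; exact Finset.prod_congr rfl fun j _ => hconst j x
      rw [this, lintegral_const, measure_univ, mul_one]
    have h2 : ∀ j, ∫⁻ x, (g j x) ^ k ∂Measure.pi μ = (g j default) ^ k := by
      intro j
      have : (fun x : Fin 0 → ℝ => g j x ^ k) = fun _ => g j default ^ k := by
        funext x; rw [hconst j x]
      rw [this, lintegral_const, measure_univ, mul_one]
    rw [h1]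
    apply le_of_eq
    refine Finset.prod_congr rfl fun j _ => ?_
    rw [h2 j, aux_pow_rpow hk.ne' _]
  | succ m IH =>
    intro μ hprob n k hk P hread g hgm hgagree
    haveI : ∀ i, IsProbabilityMeasure (μ i) := hprob
    classical
    set i₀ : Fin (m+1) := Fin.last m with hi₀
    set ν : Fin m → Measure ℝ := fun i => μ (i₀.succAbove i) with hν
    haveI : ∀ i, IsProbabilityMeasure (ν i) := fun i => hprob _
    set e := MeasurableEquiv.piFinSuccAbove (fun _ : Fin (m+1) => ℝ) i₀ with he
    have mps : MeasurePreserving e.symm ((μ i₀).prod (Measure.pi ν)) (Measure.pi μ) :=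
      (measurePreserving_piFinSuccAbove μ i₀).symm e
    have hsymm : ∀ (p : ℝ × (Fin m → ℝ)), e.symm p = insF i₀ p.1 p.2 := by
      intro p
      rw [he, MeasurableEquiv.piFinSuccAbove_symm_apply]
      rfl
    have key : ∀ (h : (Fin (m+1) → ℝ) → ℝ≥0∞), Measurable h →
        ∫⁻ x, h x ∂Measure.pi μ
          = ∫⁻ x₀, ∫⁻ y, h (insF i₀ x₀ y) ∂Measure.pi ν ∂μ i₀ := by
      intro h hm
      rw [← mps.lintegral_comp hm,
        lintegral_prod (fun z => h (e.symm z)) ((hm.comp e.symm.measurable).aemeasurable)]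
      exact lintegral_congr fun x₀ => lintegral_congr fun y => by rw [hsymm (x₀, y)]
    have hins : ∀ x₀ : ℝ, Measurable (fun y : Fin m → ℝ => insF i₀ x₀ y) := by
      intro x₀
      have : (fun y : Fin m → ℝ => insF i₀ x₀ y) = fun y => e.symm (x₀, y) := by
        funext y; rw [hsymm (x₀, y)]
      rw [this]; exact e.symm.measurable.comp measurable_prodMk_left
    have hgsm : ∀ j, Measurable (fun p : ℝ × (Fin m → ℝ) => g j (insF i₀ p.1 p.2)) := by
      intro j
      have : (fun p : ℝ × (Fin m → ℝ) => g j (insF i₀ p.1 p.2)) = (g j) ∘ ⇑e.symm := by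
        funext p; simp only [Function.comp_apply, hsymm p]
      rw [this]; exact (hgm j).comp e.symm.measurable
    set G : Fin n → ℝ → ℝ≥0∞ := fun j x₀ =>
      (∫⁻ y, g j (insF i₀ x₀ y) ^ k ∂Measure.pi ν) ^ ((1:ℝ)/k) with hG
    set B : Fin n → ℝ≥0∞ := fun j => ∫⁻ x, g j x ^ k ∂Measure.pi μ with hB
    have hGm : ∀ j, Measurable (G j) := fun j =>
      (Measurable.lintegral_prod_right (f := fun a b => g j (insF i₀ a b) ^ k)
        ((hgsm j).pow_const k)).pow_const _
    have hBeq : ∀ j, B j = ∫⁻ x₀, (G j x₀) ^ k ∂μ i₀ := by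
      intro j
      rw [hB]; dsimp only
      rw [key _ ((hgm j).pow_const k)]
      refine lintegral_congr fun x₀ => ?_
      rw [hG]; dsimp only
      rw [aux_rpow_pow hk.ne' _]
    set P' : Fin n → Finset (Fin m) :=
      fun j => Finset.univ.filter (fun i => i₀.succAbove i ∈ P j) with hP'
    have hread' : ∀ i : Fin m, (Finset.univ.filter fun j => i ∈ P' j).card ≤ k := by
      intro i
      have : (Finset.univ.filter fun j => i ∈ P' j)
           = (Finset.univ.filter fun j => i₀.succAbove i ∈ P j) := by
        ext j; simp [hP']
      rw [this]; exact hread _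
    have inner_le : ∀ x₀ : ℝ,
        ∫⁻ y, ∏ j, g j (insF i₀ x₀ y) ∂Measure.pi ν ≤ ∏ j, G j x₀ := by
      intro x₀
      refine IH ν (fun i => hprob _) hk P' hread'
        (fun j y => g j (insF i₀ x₀ y)) (fun j => (hgm j).comp (hins x₀)) ?_
      intro j y y' hyy'
      apply hgagree
      intro c hc
      rcases eq_or_ne c i₀ with rfl | hcne
      · rw [insF_same, insF_same]
      · obtain ⟨i, rfl⟩ := Fin.exists_succAbove_eq hcne
        rw [insF_succAbove, insF_succAbove]
        exact hyy' i (by simp [hP', hc])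
    have hprod_meas : Measurable (fun x : Fin (m+1) → ℝ => ∏ j, g j x) :=
      Finset.measurable_prod _ (fun j _ => hgm j)
    set S : Finset (Fin n) := Finset.univ.filter (fun j => i₀ ∈ P j) with hS
    have hScard : S.card ≤ k := hread i₀
    have hGconst : ∀ j, j ∉ S → ∀ x₀, G j x₀ = B j ^ ((1:ℝ)/k) := by
      intro j hj x₀
      have hi₀ : i₀ ∉ P j := by
        intro h; exact hj (by simp [hS, h])
      have hsame : ∀ x₀' : ℝ, ∀ y, g j (insF i₀ x₀' y) ^ k = g j (insF i₀ x₀ y) ^ k := by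
        intro x₀' y
        congr 1
        apply hgagree
        intro c hc
        have hcne : c ≠ i₀ := fun h => hi₀ (h ▸ hc)
        obtain ⟨i, rfl⟩ := Fin.exists_succAbove_eq hcne
        rw [insF_succAbove, insF_succAbove]
      have hBj : B j = ∫⁻ y, g j (insF i₀ x₀ y) ^ k ∂Measure.pi ν := by
        rw [hB]; dsimp only
        rw [key _ ((hgm j).pow_const k)]
        rw [lintegral_congr (fun x₀' => lintegral_congr (fun y => hsame x₀' y))]
        rw [lintegral_const, measure_univ, mul_one]
      rw [hG]; dsimp only; rw [← hBj]
    calc ∫⁻ x, ∏ j, g j x ∂Measure.pi μ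
        = ∫⁻ x₀, ∫⁻ y, ∏ j, g j (insF i₀ x₀ y) ∂Measure.pi ν ∂μ i₀ := key _ hprod_meas
      _ ≤ ∫⁻ x₀, ∏ j, G j x₀ ∂μ i₀ := lintegral_mono inner_le
      _ = ∫⁻ x₀, (∏ j ∈ S, G j x₀) *
            (∏ j ∈ Finset.univ.filter (fun j => ¬ i₀ ∈ P j), B j ^ ((1:ℝ)/k)) ∂μ i₀ := by
          refine lintegral_congr fun x₀ => ?_
          rw [← Finset.prod_filter_mul_prod_filter_not Finset.univ (fun j => i₀ ∈ P j)
            (fun j => G j x₀)]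
          congr 1
          refine Finset.prod_congr rfl fun j hj => ?_
          refine hGconst j ?_ x₀
          intro hjS
          simp only [hS, Finset.mem_filter, Finset.mem_univ, true_and] at hjS
          simp only [Finset.mem_filter, Finset.mem_univ, true_and] at hj
          exact hj hjS
      _ = (∫⁻ x₀, ∏ j ∈ S, G j x₀ ∂μ i₀) *
            ∏ j ∈ Finset.univ.filter (fun j => ¬ i₀ ∈ P j), B j ^ ((1:ℝ)/k) :=
          lintegral_mul_const _ (Finset.measurable_prod _ fun j _ => hGm j)
      _ ≤ (∏ j ∈ S, B j ^ ((1:ℝ)/k)) *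
            ∏ j ∈ Finset.univ.filter (fun j => ¬ i₀ ∈ P j), B j ^ ((1:ℝ)/k) := by
          refine mul_le_mul_left ?_ _
          have hH := holder_le_one (μ := μ i₀) S
            (f := fun j x₀ => (G j x₀) ^ k) (p := fun _ => (1:ℝ)/k)
            (fun j _ => ((hGm j).pow_const k).aemeasurable)
            (by
              rw [Finset.sum_const, nsmul_eq_mul]
              rw [mul_one_div]
              exact div_le_one_of_le₀ (by exact_mod_cast hScard) (by positivity))
            (fun j _ => by positivity)
          calc ∫⁻ x₀, ∏ j ∈ S, G j x₀ ∂μ i₀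
              = ∫⁻ x₀, ∏ j ∈ S, ((G j x₀) ^ k) ^ ((1:ℝ)/k) ∂μ i₀ := by
                refine lintegral_congr fun x₀ => Finset.prod_congr rfl fun j _ => ?_
                rw [aux_pow_rpow hk.ne' _]
            _ ≤ ∏ j ∈ S, (∫⁻ x₀, (G j x₀) ^ k ∂μ i₀) ^ ((1:ℝ)/k) := hH
            _ = ∏ j ∈ S, B j ^ ((1:ℝ)/k) := by
                refine Finset.prod_congr rfl fun j _ => ?_
                rw [← hBeq j]
      _ = ∏ j, B j ^ ((1:ℝ)/k) :=
          Finset.prod_filter_mul_prod_filter_not Finset.univ _ _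

/-- Read-k generalized Hölder inequality: if X₁,...,X_m are independent and
F₁,...,F_n are non-negative bounded functions forming a read-k family
(F_j depends only on the variables indexed by P j, and each i lies in at most k
of the sets P j), then E[∏ F_j] ≤ (∏ E[F_j^k])^{1/k}. -/
theorem read_k_holder {Ω : Type*} [MeasurableSpace Ω] (μ : Measure Ω)
    [IsProbabilityMeasure μ] {m n k : ℕ} (hk : 0 < k)
    (X : Fin m → Ω → ℝ) (hX : ∀ i, Measurable (X i))
    (hindep : iIndepFun X μ)
    (P : Fin n → Finset (Fin m))
    (hread : ∀ i : Fin m, (Finset.univ.filter fun j => i ∈ P j).card ≤ k)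
    (φ : ∀ j : Fin n, ({i // i ∈ P j} → ℝ) → ℝ) (hφ : ∀ j, Measurable (φ j))
    (F : Fin n → Ω → ℝ)
    (hFrep : ∀ j ω, F j ω = φ j (fun i => X i.1 ω))
    (hFnonneg : ∀ j ω, 0 ≤ F j ω)
    (hFbdd : ∀ j, ∃ C, ∀ ω, F j ω ≤ C) :
    ∫ ω, ∏ j, F j ω ∂μ ≤ (∏ j, ∫ ω, (F j ω) ^ k ∂μ) ^ ((1 : ℝ) / k) := by
  classical
  have hFmeas : ∀ j, Measurable (F j) := by
    intro j
    have : F j = fun ω => φ j (fun i => X i.1 ω) := funext (hFrep j)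
    rw [this]
    exact (hφ j).comp (measurable_pi_lambda _ fun i => hX i.1)
  set T : Ω → (Fin m → ℝ) := fun ω i => X i ω with hT
  have hTmeas : Measurable T := measurable_pi_lambda _ hX
  haveI : ∀ i, IsProbabilityMeasure (μ.map (X i)) := fun i =>
    Measure.isProbabilityMeasure_map (hX i).aemeasurable
  have hmap : Measure.pi (fun i => μ.map (X i)) = μ.map T := by
    apply Measure.pi_eq
    intro s hs
    rw [Measure.map_apply hTmeas (MeasurableSet.univ_pi hs)]
    have hpre : T ⁻¹' Set.pi Set.univ s = ⋂ i, X i ⁻¹' s i := by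
      ext ω; simp [hT, Set.mem_pi]
    rw [hpre, show (⋂ i, X i ⁻¹' s i) = ⋂ i ∈ Finset.univ, X i ⁻¹' s i by simp]
    rw [hindep.measure_inter_preimage_eq_mul Finset.univ (fun i _ => hs i)]
    exact Finset.prod_congr rfl fun i _ => (Measure.map_apply (hX i) (hs i)).symm
  set g : Fin n → (Fin m → ℝ) → ℝ≥0∞ := fun j x => ENNReal.ofReal (φ j (fun i => x i.1)) with hg
  have hgm : ∀ j, Measurable (g j) := fun j =>
    ENNReal.measurable_ofReal.comp
      ((hφ j).comp (measurable_pi_lambda _ fun i => measurable_pi_apply i.1))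
  have hgagree : ∀ j x y, (∀ i ∈ P j, x i = y i) → g j x = g j y := by
    intro j x y h
    simp only [hg]
    congr 1
    congr 1
    funext i
    exact h i.1 i.2
  have hcore := read_k_pi m (fun i => μ.map (X i)) (fun i => inferInstance) hk P hread g hgm
    hgagree
  have hT1 : ∫⁻ x, ∏ j, g j x ∂Measure.pi (fun i => μ.map (X i))
      = ∫⁻ ω, ENNReal.ofReal (∏ j, F j ω) ∂μ := by
    rw [hmap, lintegral_map (Finset.measurable_prod _ fun j _ => hgm j) hTmeas]
    refine lintegral_congr fun ω => ?_
    rw [ENNReal.ofReal_prod_of_nonneg (fun j _ => hFnonneg j ω)]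
    exact Finset.prod_congr rfl fun j _ => congrArg ENNReal.ofReal (hFrep j ω).symm
  have hT2 : ∀ j, ∫⁻ x, g j x ^ k ∂Measure.pi (fun i => μ.map (X i))
      = ∫⁻ ω, ENNReal.ofReal (F j ω ^ k) ∂μ := by
    intro j
    rw [hmap, lintegral_map ((hgm j).pow_const k) hTmeas]
    refine lintegral_congr fun ω => ?_
    rw [ENNReal.ofReal_pow (hFnonneg j ω)]
    exact congrArg (· ^ k) (congrArg ENNReal.ofReal (hFrep j ω).symm)
  rw [hT1] at hcore
  simp only [hT2] at hcore
  have hBlt : ∀ j, (∫⁻ ω, ENNReal.ofReal (F j ω ^ k) ∂μ) ≠ ∞ := by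
    intro j
    obtain ⟨C, hC⟩ := hFbdd j
    have hle : ∀ ω, ENNReal.ofReal (F j ω ^ k) ≤ ENNReal.ofReal (C ^ k) := fun ω =>
      ENNReal.ofReal_le_ofReal (pow_le_pow_left₀ (hFnonneg j ω) (hC ω) k)
    refine ne_top_of_le_ne_top ?_ ((lintegral_mono hle).trans_eq
      (by rw [lintegral_const, measure_univ, mul_one]))
    simp
  have hint1 : ∫ ω, ∏ j, F j ω ∂μ = (∫⁻ ω, ENNReal.ofReal (∏ j, F j ω) ∂μ).toReal := by
    rw [integral_eq_lintegral_of_nonneg_ae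
      (Filter.Eventually.of_forall fun ω => Finset.prod_nonneg fun j _ => hFnonneg j ω)
      (Finset.measurable_prod _ fun j _ => hFmeas j).aestronglyMeasurable]
  have hint2 : ∀ j, ∫ ω, F j ω ^ k ∂μ = (∫⁻ ω, ENNReal.ofReal (F j ω ^ k) ∂μ).toReal := by
    intro j
    rw [integral_eq_lintegral_of_nonneg_ae
      (Filter.Eventually.of_forall fun ω => pow_nonneg (hFnonneg j ω) k)
      ((hFmeas j).pow_const k).aestronglyMeasurable]
  have hrhs : (∏ j, ∫ ω, (F j ω) ^ k ∂μ) ^ ((1 : ℝ) / k)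
      = (∏ j, (∫⁻ ω, ENNReal.ofReal (F j ω ^ k) ∂μ) ^ ((1:ℝ)/k)).toReal := by
    rw [ENNReal.toReal_prod]
    rw [show (∏ j, ((∫⁻ ω, ENNReal.ofReal (F j ω ^ k) ∂μ) ^ ((1:ℝ)/k)).toReal)
        = ∏ j, ((∫⁻ ω, ENNReal.ofReal (F j ω ^ k) ∂μ).toReal) ^ ((1:ℝ)/k) from
      Finset.prod_congr rfl fun j _ => (ENNReal.toReal_rpow _ _).symm]
    rw [Real.finset_prod_rpow _ _ (fun j _ => ENNReal.toReal_nonneg) _]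
    congr 1
    exact Finset.prod_congr rfl fun j _ => hint2 j
  rw [hint1, hrhs]
  apply ENNReal.toReal_mono
  · exact (ENNReal.prod_lt_top fun j _ => lt_top_iff_ne_top.2
      (ENNReal.rpow_ne_top_of_nonneg (by positivity) (hBlt j))).ne
  · exact hcore
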